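/- Let G₁ and G₂ be groups. If G₁ satisfies the power alternative with uniform exponent m and G₂ satisfies the power alternative with uniform exponent n, then the direct product G₁ × G₂ satisfies the power alternative with uniform exponent lcm(m, n). -/

import Mathlib

/-- `x` and `y` freely generate a free subgroup of rank 2. -/
def FreelyGenerateF2 {G : Type*} [Group G] (x y : G) : Prop :=
  Function.Injective (FreeGroup.lift (fun i : Fin 2 => if i = 0 then x else y) :
    FreeGroup (Fin 2) →* G)

/-- `G` satisfies the power alternative with uniform exponent `n`. -/
def UniformPowerAlternative (G : Type*) [Group G] (n : ℕ) : Prop :=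
  ∀ g h : G, Commute (g ^ n) (h ^ n) ∨ FreelyGenerateF2 (g ^ n) (h ^ n)

/-- If the images under a homomorphism freely generate, so do the originals. -/
lemma FreelyGenerateF2.of_map {G H : Type*} [Group G] [Group H] (φ : G →* H) {x y : G}
    (h : FreelyGenerateF2 (φ x) (φ y)) : FreelyGenerateF2 x y := by
  unfold FreelyGenerateF2 at *
  have key : (φ.comp (FreeGroup.lift (fun i : Fin 2 => if i = 0 then x else y)))
      = FreeGroup.lift (fun i : Fin 2 => if i = 0 then φ x else φ y) := by
    ext i
    simp only [MonoidHom.comp_apply, FreeGroup.lift_apply_of]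
    split <;> simp
  have : Function.Injective
      (φ.comp (FreeGroup.lift (fun i : Fin 2 => if i = 0 then x else y))) := by
    rw [key]; exact h
  exact Function.Injective.of_comp this

/-- the uniform power alternative is stable under direct products,
with exponent the lcm of the two exponents. -/
theorem uniform_power_alternative_prod
    {G₁ G₂ : Type*} [Group G₁] [Group G₂] (m n : ℕ)
    (h₁ : UniformPowerAlternative G₁ m) (h₂ : UniformPowerAlternative G₂ n) :
    UniformPowerAlternative (G₁ × G₂) (Nat.lcm m n) := by
  intro g h
  set N := Nat.lcm m n with hN
  have hm : m ∣ N := Nat.dvd_lcm_left m n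
  have hn : n ∣ N := Nat.dvd_lcm_right m n
  have e1 : ∀ x : G₁, x ^ N = (x ^ (N / m)) ^ m := by
    intro x; rw [← pow_mul, Nat.div_mul_cancel hm]
  have e2 : ∀ x : G₂, x ^ N = (x ^ (N / n)) ^ n := by
    intro x; rw [← pow_mul, Nat.div_mul_cancel hn]
  rcases h₁ (g.1 ^ (N / m)) (h.1 ^ (N / m)) with hc1 | hf1
  · rcases h₂ (g.2 ^ (N / n)) (h.2 ^ (N / n)) with hc2 | hf2
    · left
      rw [Commute, SemiconjBy, Prod.ext_iff]
      constructor
      · simpa [e1 g.1, e1 h.1] using hc1.eq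
      · simpa [e2 g.2, e2 h.2] using hc2.eq
    · right
      refine FreelyGenerateF2.of_map (MonoidHom.snd G₁ G₂) ?_
      simpa [e2 g.2, e2 h.2] using hf2
  · right
    refine FreelyGenerateF2.of_map (MonoidHom.fst G₁ G₂) ?_
    simpa [e1 g.1, e1 h.1] using hf1
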